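/- Let R be a commutative ring. Call a function v : R → ℕ ∪ {∞} a positive prevaluation if v(0) = ∞, v(a + b) ≥ min(v(a), v(b)) for all a, b, v(1) = 0, and v(a·b) = v(a) + v(b) for all a, b. Then the assignment v ↦ w_v, where w_v(I) = inf {v(a) | a ∈ I} for each ideal I of R, is a bijection from the set of positive prevaluations on R onto the set of functions w : Idl(R) → ℕ ∪ {∞} such that w sends arbitrary suprema of ideals to infima (w(sSup 𝒮) = inf {w(I) | I ∈ 𝒮} for every set 𝒮 of ideals, where the infimum of the empty family is ∞), w(I·J) = w(I) + w(J) for all ideals I, J, and w(R) = 0. -/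

import Mathlib

/-- A positive prevaluation on a commutative ring `R`. -/
def IsPosPrevaluation {R : Type*} [CommRing R] (v : R → ℕ∞) : Prop :=
  v 0 = ⊤ ∧ (∀ a b : R, min (v a) (v b) ≤ v (a + b)) ∧ v 1 = 0 ∧
    ∀ a b : R, v (a * b) = v a + v b

/-- A quantale valuation on the quantale of ideals of `R`: it sends arbitrary suprema of
ideals to infima, products of ideals to sums, and the unit ideal to `0`. -/
def IsQuantaleValuation {R : Type*} [CommRing R] (w : Ideal R → ℕ∞) : Prop :=
  (∀ 𝒮 : Set (Ideal R), w (sSup 𝒮) = ⨅ I ∈ 𝒮, w I) ∧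
  (∀ I J : Ideal R, w (I * J) = w I + w J) ∧ w ⊤ = 0

lemma ENat.exists_biInf' {α : Type*} {s : Set α} (hs : s.Nonempty) (f : α → ℕ∞) :
    ∃ a ∈ s, f a = ⨅ x ∈ s, f x := by
  have h : sInf (f '' s) ∈ f '' s := csInf_mem (hs.image f)
  obtain ⟨a, ha, hfa⟩ := h
  exact ⟨a, ha, by rw [hfa, sInf_image]⟩

lemma infi_span' {R : Type*} [CommRing R] {v : R → ℕ∞} (hv : IsPosPrevaluation v)
    (S : Set R) : (⨅ a ∈ Ideal.span S, v a) = ⨅ a ∈ S, v a := by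
  obtain ⟨h0, hadd, h1, hmul⟩ := hv
  apply le_antisymm
  · exact iInf_le_iInf_of_subset Ideal.subset_span
  · refine le_iInf₂ fun a ha => ?_
    induction ha using Submodule.span_induction with
    | mem x hx => exact iInf₂_le x hx
    | zero => simp [h0]
    | add x y _ _ hx hy => exact le_trans (le_min hx hy) (hadd x y)
    | smul r x _ hx =>
      calc (⨅ a ∈ S, v a) ≤ v x := hx
      _ ≤ v (r • x) := by rw [smul_eq_mul, hmul]; exact le_add_self

lemma eval_span_singleton' {R : Type*} [CommRing R] {v : R → ℕ∞}
    (hv : IsPosPrevaluation v) (a : R) : (⨅ x ∈ Ideal.span {a}, v x) = v a := by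
  rw [infi_span' hv]; simp

/-- `v ↦ (I ↦ inf {v a | a ∈ I})` is a bijection from positive prevaluations
on `R` onto quantale valuations `Idl(R) → ℕ∞`. -/
theorem prevaluation_valuation_bijection {R : Type*} [CommRing R] :
    Set.BijOn (fun (v : R → ℕ∞) => fun I : Ideal R => ⨅ a ∈ I, v a)
      {v | IsPosPrevaluation v} {w | IsQuantaleValuation w} := by
  constructor
  · -- MapsTo
    rintro v hv
    obtain ⟨h0, hadd, h1, hmul⟩ := hv
    refine ⟨fun 𝒮 => ?_, fun I J => ?_, ?_⟩ <;> beta_reduce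
    · have : sSup 𝒮 = Ideal.span (⋃ I : 𝒮, ((I : Ideal R) : Set R)) := by
        rw [Ideal.span_iUnion]
        simp only [Ideal.span_eq, sSup_eq_iSup']
      rw [this, infi_span' ⟨h0, hadd, h1, hmul⟩, iInf_iUnion]
      exact iInf_subtype'' 𝒮 fun I => ⨅ a ∈ I, v a
    · apply le_antisymm
      · have hIne : (I : Set R).Nonempty := ⟨0, I.zero_mem⟩
        have hJne : (J : Set R).Nonempty := ⟨0, J.zero_mem⟩
        obtain ⟨a, ha, hva⟩ := ENat.exists_biInf' hIne v
        obtain ⟨b, hb, hvb⟩ := ENat.exists_biInf' hJne v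
        calc (⨅ x ∈ I * J, v x) ≤ v (a * b) := iInf₂_le _ (Ideal.mul_mem_mul ha hb)
        _ = _ := by rw [hmul, hva, hvb]; rfl
      · refine le_iInf₂ fun x hx => ?_
        refine Submodule.mul_induction_on hx (fun a ha b hb => ?_)
          (fun x y hx hy => le_trans (le_min hx hy) (hadd x y))
        rw [hmul]
        exact add_le_add (iInf₂_le a ha) (iInf₂_le b hb)
    · refine le_antisymm ?_ zero_le
      calc (⨅ x ∈ (⊤ : Ideal R), v x) ≤ v 1 := iInf₂_le 1 trivial
      _ = 0 := h1
  constructor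
  · -- InjOn
    rintro v₁ hv₁ v₂ hv₂ h
    funext a
    have := congrFun h (Ideal.span {a})
    simpa [eval_span_singleton' hv₁, eval_span_singleton' hv₂] using this
  · -- SurjOn
    rintro w ⟨hsup, hmul, htop⟩
    set v : R → ℕ∞ := fun a => w (Ideal.span {a}) with hvdef
    have hmono : ∀ I J : Ideal R, I ≤ J → w J ≤ w I := by
      intro I J hIJ
      have : sSup {I, J} = J := by rw [sSup_pair, sup_eq_right.mpr hIJ]
      have h2 := hsup {I, J}
      rw [this] at h2
      rw [h2]
      exact iInf₂_le I (by simp)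
    have hv : IsPosPrevaluation v := by
      refine ⟨?_, ?_, ?_, ?_⟩
      · show w (Ideal.span {0}) = ⊤
        rw [Ideal.span_singleton_eq_bot.mpr rfl]
        have := hsup ∅
        simpa using this
      · intro a b
        show min (w _) (w _) ≤ w (Ideal.span {a + b})
        have hle : Ideal.span {a + b} ≤ Ideal.span {a} ⊔ Ideal.span {b} := by
          rw [Ideal.span_singleton_le_iff_mem]
          exact add_mem (le_sup_left (a := Ideal.span {a})
            (Ideal.subset_span rfl))
            (le_sup_right (b := Ideal.span {b}) (Ideal.subset_span rfl))
        refine le_trans ?_ (hmono _ _ hle)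
        have : Ideal.span {a} ⊔ Ideal.span {b} = sSup {Ideal.span {a}, Ideal.span {b}} :=
          (sSup_pair).symm
        rw [this, hsup]
        simp [iInf_pair]
      · show w (Ideal.span {1}) = 0
        rw [Ideal.span_singleton_one]; exact htop
      · intro a b
        show w (Ideal.span {a * b}) = w (Ideal.span {a}) + w (Ideal.span {b})
        rw [← Ideal.span_singleton_mul_span_singleton, hmul]
    have heq : (fun I : Ideal R => ⨅ a ∈ I, v a) = w := by
      funext I
      show (⨅ a ∈ I, w (Ideal.span {a})) = w I
      have hI : I = sSup ((fun a => Ideal.span {a}) '' (I : Set R)) := by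
        apply le_antisymm
        · intro x hx
          have h1 : Ideal.span {x} ≤ sSup ((fun a => Ideal.span {a}) '' (I : Set R)) :=
            le_sSup ⟨x, hx, rfl⟩
          exact h1 (Ideal.subset_span rfl)
        · refine sSup_le ?_
          rintro J ⟨a, ha, rfl⟩
          rwa [Ideal.span_singleton_le_iff_mem]
      conv_rhs => rw [hI, hsup]
      rw [iInf_image]
      rfl
    exact ⟨v, hv, heq⟩
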